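/- arXiv:2206.06334 — 2 statements merged into one kernel-verified Lean document; each statement's English description precedes it below -/
import Mathlib

section
/- Let X be a real symmetric positive definite n×n matrix and Y a real symmetric n×n matrix. Let S be the 2n×2n block matrix [[X^{1/2}, 0],[X^{−1/2}Y, X^{−1/2}]], where X^{1/2} is the positive definite square root of X. Then S is symplectic, and SᵀS equals the block matrix G := [[X + Y X⁻¹ Y, Y X⁻¹],[X⁻¹ Y, X⁻¹]]; consequently G is symmetric, positive definite, and symplectic. -/
open Matrix Set

noncomputable section

/-- The standard symplectic matrix `J = [[0, I],[-I, 0]]` on `ℝ²ⁿ = ℝⁿ ⊕ ℝⁿ`. -/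
def J (n : ℕ) : Matrix (Fin n ⊕ Fin n) (Fin n ⊕ Fin n) ℝ :=
  Matrix.fromBlocks 0 1 (-1) 0

/-- `S ∈ Sp(n)` iff `Sᵀ J S = J`. -/
def IsSymplectic {n : ℕ} (S : Matrix (Fin n ⊕ Fin n) (Fin n ⊕ Fin n) ℝ) : Prop :=
  Sᵀ * J n * S = J n

/-- The positive semidefinite square root of a positive semidefinite matrix (the definition
`Matrix.PosSemidef.sqrt` of the older Mathlib, which has since been removed). -/
def Matrix.PosSemidef.sqrt {m : Type*} [Fintype m] [DecidableEq m] {A : Matrix m m ℝ}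
    (hA : A.PosSemidef) : Matrix m m ℝ :=
  hA.1.eigenvectorUnitary.1 * diagonal ((↑) ∘ (√·) ∘ hA.1.eigenvalues) *
    (star hA.1.eigenvectorUnitary : Matrix m m ℝ)

/-- for `X` symmetric positive definite and `Y` symmetric, the matrix
`S = [[X^{1/2}, 0],[X^{-1/2}Y, X^{-1/2}]]` (with `X^{1/2}` the positive square root of
`X`) is symplectic, `SᵀS = G := [[X + YX⁻¹Y, YX⁻¹],[X⁻¹Y, X⁻¹]]`, and consequently `G`
is symmetric, positive definite and symplectic. -/
theorem gaussian_matrix_symplectic_factorization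
    {n : ℕ} (X Y : Matrix (Fin n) (Fin n) ℝ)
    (hX : X.PosDef) (hY : Y.IsSymm)
    (S : Matrix (Fin n ⊕ Fin n) (Fin n ⊕ Fin n) ℝ)
    (hS : S = Matrix.fromBlocks hX.posSemidef.sqrt 0
        ((hX.posSemidef.sqrt)⁻¹ * Y) (hX.posSemidef.sqrt)⁻¹)
    (G : Matrix (Fin n ⊕ Fin n) (Fin n ⊕ Fin n) ℝ)
    (hG : G = Matrix.fromBlocks (X + Y * X⁻¹ * Y) (Y * X⁻¹) (X⁻¹ * Y) X⁻¹) :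
    IsSymplectic S ∧ Sᵀ * S = G ∧ Gᵀ = G ∧ G.PosDef ∧ IsSymplectic G := by
  set R := hX.posSemidef.sqrt with hRdef
  have hRR : R * R = X := by
    have hU := Unitary.coe_star_mul_self hX.posSemidef.1.eigenvectorUnitary
    have hsp := hX.posSemidef.1.spectral_theorem
    rw [hRdef, Matrix.PosSemidef.sqrt]
    conv_rhs => rw [hsp]
    simp only [Unitary.conjStarAlgAut_apply]
    have hD : diagonal (((↑) : ℝ → ℝ) ∘ (√·) ∘ hX.posSemidef.1.eigenvalues) *
        diagonal (((↑) : ℝ → ℝ) ∘ (√·) ∘ hX.posSemidef.1.eigenvalues) =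
        Matrix.diagonal ((RCLike.ofReal : ℝ → ℝ) ∘ hX.posSemidef.1.eigenvalues) := by
      rw [diagonal_mul_diagonal]
      congr 1
      funext i
      simp [Real.mul_self_sqrt (hX.posSemidef.eigenvalues_nonneg i)]
    rw [← hD]
    simp only [Matrix.mul_assoc]
    rw [← Matrix.mul_assoc (star _ : Matrix _ _ ℝ) _ (Matrix.diagonal _ * _), hU, Matrix.one_mul]
  have hRs : Rᵀ = R := by
    rw [← Matrix.conjTranspose_eq_transpose_of_trivial, hRdef, Matrix.PosSemidef.sqrt,
      Matrix.conjTranspose_mul, Matrix.conjTranspose_mul, diagonal_conjTranspose,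
      ← star_eq_conjTranspose, ← star_eq_conjTranspose, star_star, Matrix.mul_assoc]
    congr 2
  have hdet : IsUnit R.det := by
    have hXdet : (0:ℝ) < X.det := hX.det_pos
    rw [← hRR, Matrix.det_mul] at hXdet
    exact isUnit_iff_ne_zero.2 fun h => by simp [h] at hXdet
  have hRL : R⁻¹ * R = 1 := Matrix.nonsing_inv_mul R hdet
  have hRRi : R * R⁻¹ = 1 := Matrix.mul_nonsing_inv R hdet
  have hRis : (R⁻¹)ᵀ = R⁻¹ := by rw [Matrix.transpose_nonsing_inv, hRs]
  have hRiRi : R⁻¹ * R⁻¹ = X⁻¹ := by rw [← hRR, Matrix.mul_inv_rev]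
  have hYs : Yᵀ = Y := hY
  have hRRiY : R * (R⁻¹ * Y) = Y := by rw [← Matrix.mul_assoc, hRRi, Matrix.one_mul]
  have hST : Sᵀ = Matrix.fromBlocks R (Y * R⁻¹) 0 R⁻¹ := by
    rw [hS, Matrix.fromBlocks_transpose, hRs, hRis, Matrix.transpose_mul, hRis, hYs,
      Matrix.transpose_zero]
  have hsymp : IsSymplectic S := by
    unfold IsSymplectic _root_.J
    rw [hST, hS, Matrix.fromBlocks_multiply, Matrix.fromBlocks_multiply]
    simp [Matrix.mul_assoc, hRL, hRRi, hRRiY]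
  have b11 : R * R + Y * R⁻¹ * (R⁻¹ * Y) = X + Y * X⁻¹ * Y := by
    rw [hRR]
    congr 1
    rw [Matrix.mul_assoc Y, ← Matrix.mul_assoc R⁻¹, hRiRi, ← Matrix.mul_assoc]
  have hRiRiY : R⁻¹ * (R⁻¹ * Y) = X⁻¹ * Y := by rw [← Matrix.mul_assoc, hRiRi]
  have hSS : Sᵀ * S = G := by
    rw [hST, hS, hG, Matrix.fromBlocks_multiply, b11]
    simp [Matrix.mul_assoc, hRiRi, hRiRiY]
  have hGs : Gᵀ = G := by
    rw [← hSS, Matrix.transpose_mul, Matrix.transpose_transpose]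
  have hSJS : S * _root_.J n * Sᵀ = _root_.J n := by
    unfold _root_.J
    rw [hST, hS, Matrix.fromBlocks_multiply, Matrix.fromBlocks_multiply]
    simp [Matrix.mul_assoc, hRL, hRRi]
  have hSdet : IsUnit S := by
    rw [Matrix.isUnit_iff_isUnit_det, hS, Matrix.det_fromBlocks_zero₁₂,
      Matrix.det_nonsing_inv, Ring.inverse_eq_inv]
    exact hdet.mul (isUnit_iff_ne_zero.2 (inv_ne_zero (isUnit_iff_ne_zero.1 hdet)))
  have hGpd : G.PosDef := by
    constructor
    · rwa [Matrix.IsHermitian, Matrix.conjTranspose_eq_transpose_of_trivial]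
    · intro x hx
      have hSx : S *ᵥ x ≠ 0 := fun h =>
        hx (DFunLike.coe_injective (Matrix.mulVec_injective_iff_isUnit.2 hSdet (by simpa using h)))
      have : star x ⬝ᵥ (G *ᵥ x) = (S *ᵥ x) ⬝ᵥ (S *ᵥ x) := by
        rw [← hSS, star_trivial, ← Matrix.mulVec_mulVec, Matrix.dotProduct_mulVec,
          Matrix.vecMul_transpose]
      have hsum : (x.sum fun i xi => x.sum fun j xj => star xi * G i j * xj) =
          star ⇑x ⬝ᵥ (G *ᵥ ⇑x) := by
        simp [dotProduct, mulVec, Finsupp.sum_fintype, Finset.mul_sum, mul_assoc, mul_add]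
      rw [hsum]
      rw [this, ← star_trivial (S *ᵥ x)]
      exact Matrix.dotProduct_star_self_pos_iff.2 hSx
  have hGsymp : IsSymplectic G := by
    unfold IsSymplectic
    rw [hGs, ← hSS]
    calc Sᵀ * S * _root_.J n * (Sᵀ * S) = Sᵀ * (S * _root_.J n * Sᵀ) * S := by
          simp only [Matrix.mul_assoc]
      _ = _root_.J n := by rw [hSJS]; exact hsymp
  exact ⟨hsymp, hSS, hGs, hGpd, hGsymp⟩
end
end

section
/- Let Σ be a real symmetric positive definite 2n×2n matrix such that the complex Hermitian matrix Σ + (iℏ/2)J is positive semidefinite. Then det Σ = (ℏ/2)^{2n} if and only if the covariance ellipsoid Ω := {z ∈ ℝ^{2n} : Σ⁻¹z·z ≤ 2} is a quantum blob, equivalently if and only if Σ = (ℏ/2) S Sᵀ for some S ∈ Sp(n). (In terms of the Gaussian density operator with covariance matrix Σ, whose purity is (ℏ/2)ⁿ(det Σ)^{−1/2}, this says the state is pure exactly when Ω is a quantum blob.) -/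
open Matrix Set ComplexOrder

noncomputable section

/-- The closed ball `B²ⁿ(√ℏ) = {z : z·z ≤ ℏ}` of radius `√ℏ` centered at `0`. -/
def ballh (n : ℕ) (ℏ : ℝ) : Set (Fin n ⊕ Fin n → ℝ) :=
  {z | z ⬝ᵥ z ≤ ℏ}

lemma pg_J_eq (n : ℕ) : J n = -(Matrix.J (Fin n) ℝ) := by
  rw [_root_.J, Matrix.J, Matrix.fromBlocks_neg, neg_neg, neg_zero]

lemma pg_J_transpose (n : ℕ) : (J n)ᵀ = -J n := by
  rw [pg_J_eq]; simp

lemma pg_J_mul_J (n : ℕ) : J n * J n = -1 := by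
  rw [pg_J_eq]; simpa using Matrix.J_squared (Fin n) ℝ

lemma pg_J_mul_Jt (n : ℕ) : J n * (J n)ᵀ = 1 := by
  rw [pg_J_transpose, Matrix.mul_neg, pg_J_mul_J, neg_neg]

lemma pg_Jt_mul_J (n : ℕ) : (J n)ᵀ * J n = 1 := by
  rw [pg_J_transpose, Matrix.neg_mul, pg_J_mul_J, neg_neg]

lemma pg_J_det_sq (n : ℕ) : (J n).det * (J n).det = 1 := by
  have h := congrArg Matrix.det (pg_J_mul_J n)
  rw [Matrix.det_mul] at h
  rw [h, Matrix.det_neg, Matrix.det_one, Fintype.card_sum, Fintype.card_fin, mul_one]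
  exact Even.neg_one_pow (Even.add_self n)

section Aux
variable {m : Type*} [Fintype m] [DecidableEq m]

lemma pg_dot (M : Matrix m m ℝ) (u v : m → ℝ) :
    (Mᵀ *ᵥ u) ⬝ᵥ v = u ⬝ᵥ (M *ᵥ v) := by
  rw [Matrix.dotProduct_mulVec, ← Matrix.vecMul_transpose, Matrix.transpose_transpose]

lemma pg_posDef_of_psd_det (A : Matrix m m ℝ) (hA : A.PosSemidef) (hd : A.det ≠ 0) :
    A.PosDef := by
  refine posDef_iff_dotProduct_mulVec.mpr ⟨hA.1, fun x hx => ?_⟩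
  rcases lt_or_eq_of_le (hA.dotProduct_mulVec_nonneg x) with h | h
  · exact h
  · exfalso
    have h0 : A *ᵥ x = 0 := (hA.dotProduct_mulVec_zero_iff x).mp h.symm
    exact hd ((Matrix.exists_mulVec_eq_zero_iff).mp ⟨x, hx, h0⟩)

lemma pg_smul_posDef {c : ℝ} (hc : 0 < c) {A : Matrix m m ℝ} (hA : A.PosDef) :
    (c • A).PosDef := by
  refine posDef_iff_dotProduct_mulVec.mpr ⟨?_, fun x hx => ?_⟩
  · rw [Matrix.IsHermitian, Matrix.conjTranspose_smul]
    rw [show (star c) = c from rfl]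
    rw [hA.1.eq]
  · rw [Matrix.smul_mulVec, dotProduct_smul, smul_eq_mul]
    exact mul_pos hc (hA.dotProduct_mulVec_pos hx)

lemma pg_mul_transpose_posDef (S : Matrix m m ℝ) (hS : S.det ≠ 0) : (S * Sᵀ).PosDef := by
  apply pg_posDef_of_psd_det
  · have := Matrix.posSemidef_self_mul_conjTranspose S
    simpa [Matrix.conjTranspose_eq_transpose_of_trivial] using this
  · rw [Matrix.det_mul, Matrix.det_transpose]
    exact mul_ne_zero hS hS

/-- Real part of the complex quadratic form of `A + i c B` at `x = a + i b`. -/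
lemma pg_quad_re (A B : Matrix m m ℝ) (c : ℝ)
    (hB : Bᵀ = -B)
    (h : (A.map (Complex.ofReal ·) + (Complex.I * (c : ℝ)) •
        B.map (Complex.ofReal ·)).PosSemidef)
    (a b : m → ℝ) :
    0 ≤ a ⬝ᵥ A.mulVec a + b ⬝ᵥ A.mulVec b + 2 * c * (b ⬝ᵥ B.mulVec a) := by
  classical
  set x : m → ℂ := fun i => (a i : ℂ) + Complex.I * (b i : ℂ) with hx
  have h2 := h.dotProduct_mulVec_nonneg x
  have hre : (0 : ℝ) ≤ (star x ⬝ᵥ ((A.map (Complex.ofReal ·) + (Complex.I * (c : ℝ)) •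
      B.map (Complex.ofReal ·)) *ᵥ x)).re := by
    rw [Complex.le_def] at h2
    simpa using h2.1
  have key : (star x ⬝ᵥ ((A.map (Complex.ofReal ·) + (Complex.I * (c : ℝ)) •
      B.map (Complex.ofReal ·)) *ᵥ x)).re
      = a ⬝ᵥ A.mulVec a + b ⬝ᵥ A.mulVec b
        + c * (b ⬝ᵥ B.mulVec a) - c * (a ⬝ᵥ B.mulVec b) := by
    have expand : ∀ i j : m,
        (starRingEnd ℂ (x i) * (((A i j : ℂ) + (Complex.I * (c : ℂ)) * (B i j : ℂ)) * x j)).re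
          = a i * (A i j * a j) + b i * (A i j * b j)
            + c * (b i * (B i j * a j)) - c * (a i * (B i j * b j)) := by
      intro i j
      simp only [hx, map_add, _root_.map_mul, Complex.conj_I, Complex.conj_ofReal]
      simp only [Complex.add_re, Complex.mul_re, Complex.mul_im, Complex.I_re, Complex.I_im,
        Complex.ofReal_re, Complex.ofReal_im, Complex.add_im, Complex.neg_re, Complex.neg_im]
      ring
    calc (star x ⬝ᵥ ((A.map (Complex.ofReal ·) + (Complex.I * (c : ℝ)) •
        B.map (Complex.ofReal ·)) *ᵥ x)).re
        = ∑ i, ∑ j, (starRingEnd ℂ (x i) *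
            (((A i j : ℂ) + (Complex.I * (c : ℂ)) * (B i j : ℂ)) * x j)).re := by
          simp only [dotProduct, mulVec, Pi.star_apply, Complex.star_def,
            Matrix.add_apply, Matrix.smul_apply, Matrix.map_apply, smul_eq_mul,
            Finset.mul_sum, Complex.re_sum, Complex.ofReal_mul]
      _ = _ := by
          simp only [expand, Finset.sum_add_distrib, Finset.sum_sub_distrib,
            ← Finset.mul_sum]
          simp [dotProduct, mulVec, Finset.mul_sum]
  rw [key] at hre
  have skew : a ⬝ᵥ B.mulVec b = -(b ⬝ᵥ B.mulVec a) := by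
    rw [Matrix.dotProduct_mulVec, ← Matrix.mulVec_transpose, hB]
    simp [Matrix.neg_mulVec, dotProduct_comm]
  rw [skew] at hre
  linarith

/-- A real psd matrix with `det (1 + P) = 1` is zero. -/
lemma pg_psd_det_one (P : Matrix m m ℝ)
    (hP : P.PosSemidef) (hdet : (1 + P).det = 1) : P = 0 := by
  have hH := hP.1
  have hspec := hH.spectral_theorem
  rw [Unitary.conjStarAlgAut_apply] at hspec
  set U : Matrix m m ℝ := (hH.eigenvectorUnitary : Matrix m m ℝ) with hUdef
  have hU : U * star U = 1 := (Matrix.mem_unitaryGroup_iff).mp hH.eigenvectorUnitary.2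
  set D : Matrix m m ℝ := diagonal (RCLike.ofReal ∘ hH.eigenvalues) with hDdef
  have h1 : (1 : Matrix m m ℝ) + P = U * (1 + D) * star U := by
    rw [Matrix.mul_add, Matrix.mul_one, Matrix.add_mul, hU, ← hspec]
  have hdet2 : ∏ i, (1 + hH.eigenvalues i) = 1 := by
    have h3 : (1 + P).det = (U * star U).det * (1 + D).det := by
      rw [h1, Matrix.det_mul, Matrix.det_mul, Matrix.det_mul]; ring
    rw [hU, Matrix.det_one, one_mul, hdet] at h3
    have h4 : (1 : Matrix m m ℝ) + D = diagonal (fun i => 1 + hH.eigenvalues i) := by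
      rw [hDdef, ← Matrix.diagonal_one, Matrix.diagonal_add]
      congr 1
    rw [h4, Matrix.det_diagonal] at h3
    exact h3.symm
  have heig : ∀ i, hH.eigenvalues i = 0 := by
    intro i
    have hnn := hP.eigenvalues_nonneg
    have hle : 1 + hH.eigenvalues i ≤ ∏ j, (1 + hH.eigenvalues j) := by
      have h5 := Finset.prod_le_prod (s := Finset.univ)
        (f := fun j => if j = i then 1 + hH.eigenvalues i else 1)
        (g := fun j => 1 + hH.eigenvalues j)
        (fun j _ => by by_cases h : j = i <;> simp [h] <;> linarith [hnn i])
        (fun j _ => by by_cases h : j = i <;> simp [h] <;> linarith [hnn j])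
      simpa using h5
    rw [hdet2] at hle
    linarith [hnn i]
  have hdiag : D = 0 := by
    rw [hDdef]
    have : (RCLike.ofReal ∘ hH.eigenvalues : m → ℝ) = (fun _ => 0) :=
      funext fun i => by simp [heig i, RCLike.ofReal]
    rw [this]
    simp
  rw [hspec, hdiag, Matrix.mul_zero, Matrix.zero_mul]

open scoped MatrixOrder in
/-- Rigidity: `B` posdef, `D` psd, `det (B + D) = det B` implies `D = 0`. -/
lemma pg_det_rigid (B D : Matrix m m ℝ)
    (hB : B.PosDef) (hD : D.PosSemidef) (h : (B + D).det = B.det) : D = 0 := by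
  set R : Matrix m m ℝ := CFC.sqrt B with hRdef
  have hRpsd : R.PosSemidef := (CFC.sqrt_nonneg B).posSemidef
  have hRR : R * R = B := CFC.sqrt_mul_sqrt_self B hB.posSemidef.nonneg
  have hdetR : R.det * R.det = B.det := by rw [← Matrix.det_mul, hRR]
  have hBdet : 0 < B.det := hB.det_pos
  have hRdet : R.det ≠ 0 := fun h0 => by rw [h0, mul_zero] at hdetR; linarith
  have hRunit : IsUnit R.det := isUnit_iff_ne_zero.mpr hRdet
  have hRinv : R * R⁻¹ = 1 := Matrix.mul_nonsing_inv R hRunit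
  have hRinv' : R⁻¹ * R = 1 := Matrix.nonsing_inv_mul R hRunit
  have hRiH : R⁻¹ᵀ = R⁻¹ := by
    rw [Matrix.transpose_nonsing_inv]
    rw [show Rᵀ = R from hRpsd.1]
  have hE : (R⁻¹ * D * R⁻¹).PosSemidef := by
    have := hD.mul_mul_conjTranspose_same R⁻¹
    simpa [Matrix.conjTranspose_eq_transpose_of_trivial, hRiH] using this
  have hB1 : R⁻¹ * B * R⁻¹ = 1 := by
    rw [← hRR, ← Matrix.mul_assoc, hRinv', Matrix.one_mul, hRinv]
  have h1E : (1 : Matrix m m ℝ) + R⁻¹ * D * R⁻¹ = R⁻¹ * (B + D) * R⁻¹ := by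
    rw [Matrix.mul_add, Matrix.add_mul, hB1]
  have hdetRi : R⁻¹.det = (R.det)⁻¹ := by
    rw [Matrix.det_nonsing_inv, Ring.inverse_eq_inv']
  have hdetE : ((1 : Matrix m m ℝ) + R⁻¹ * D * R⁻¹).det = 1 := by
    rw [h1E, Matrix.det_mul, Matrix.det_mul, hdetRi, h, ← hdetR]
    field_simp
  have hE0 : R⁻¹ * D * R⁻¹ = 0 := pg_psd_det_one _ hE hdetE
  have hfin : R * (R⁻¹ * D * R⁻¹) * R = D := by
    calc R * (R⁻¹ * D * R⁻¹) * R = (R * R⁻¹) * D * (R⁻¹ * R) := by noncomm_ring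
      _ = D := by rw [hRinv, hRinv', Matrix.one_mul, Matrix.mul_one]
  rw [hE0, Matrix.mul_zero, Matrix.zero_mul] at hfin
  exact hfin.symm

/-- Polarization: symmetric real matrices with equal quadratic forms are equal. -/
lemma pg_polarization (A B : Matrix m m ℝ)
    (hA : Aᵀ = A) (hB : Bᵀ = B)
    (h : ∀ z, A.mulVec z ⬝ᵥ z = B.mulVec z ⬝ᵥ z) : A = B := by
  have hq : ∀ z, (A - B).mulVec z ⬝ᵥ z = 0 := by
    intro z
    rw [Matrix.sub_mulVec, sub_dotProduct, h z, sub_self]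
  have hdiag : ∀ i, (A - B) i i = 0 := by
    intro i
    have := hq (Pi.single i 1)
    simpa [Matrix.mulVec_single, dotProduct_single] using this
  ext i j
  by_cases hij : i = j
  · subst hij; exact sub_eq_zero.mp (hdiag i)
  · have h2 := hq (Pi.single i 1 + Pi.single j 1)
    have hsym : (A - B) j i = (A - B) i j := by
      have : (A - B)ᵀ = A - B := by rw [Matrix.transpose_sub, hA, hB]
      conv_lhs => rw [← this]
      rfl
    rw [Matrix.mulVec_add, add_dotProduct, dotProduct_add,
      dotProduct_add] at h2
    simp only [Matrix.mulVec_single, mul_one, MulOpposite.op_one, one_smul] at h2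
    change (fun k => (A - B) k i) ⬝ᵥ _ + (fun k => (A - B) k i) ⬝ᵥ _ +
      ((fun k => (A - B) k j) ⬝ᵥ _ + (fun k => (A - B) k j) ⬝ᵥ _) = 0 at h2
    have e1 : (fun k => (A - B) k i) ⬝ᵥ Pi.single i 1 = (A - B) i i := by
      simp [dotProduct_single]
    have e2 : (fun k => (A - B) k i) ⬝ᵥ Pi.single j 1 = (A - B) j i := by
      simp [dotProduct_single]
    have e3 : (fun k => (A - B) k j) ⬝ᵥ Pi.single i 1 = (A - B) i j := by
      simp [dotProduct_single]
    have e4 : (fun k => (A - B) k j) ⬝ᵥ Pi.single j 1 = (A - B) j j := by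
      simp [dotProduct_single]
    rw [e1, e2, e3, e4, hdiag i, hdiag j, hsym] at h2
    have h0 : (A - B) i j = 0 := by linarith
    exact sub_eq_zero.mp h0

/-- Two posdef matrices defining the same ellipsoid are equal. -/
lemma pg_ellipsoid_eq (A B : Matrix m m ℝ)
    (hA : A.PosDef) (hB : B.PosDef)
    (h : {z : m → ℝ | A.mulVec z ⬝ᵥ z ≤ 2} = {z | B.mulVec z ⬝ᵥ z ≤ 2}) : A = B := by
  have key : ∀ (C D : Matrix m m ℝ), C.PosDef → D.PosDef →
      ({z : m → ℝ | C.mulVec z ⬝ᵥ z ≤ 2} ⊆ {z | D.mulVec z ⬝ᵥ z ≤ 2}) →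
      ∀ z, D.mulVec z ⬝ᵥ z ≤ C.mulVec z ⬝ᵥ z := by
    intro C D hC hD hsub z
    by_cases hz : z = 0
    · simp [hz]
    · have hCz : 0 < C.mulVec z ⬝ᵥ z := by
        have := hC.dotProduct_mulVec_pos hz
        simpa [dotProduct_comm] using this
      have hDz : 0 < D.mulVec z ⬝ᵥ z := by
        have := hD.dotProduct_mulVec_pos hz
        simpa [dotProduct_comm] using this
      set t : ℝ := Real.sqrt (2 / (C.mulVec z ⬝ᵥ z)) with ht
      have ht2 : t ^ 2 = 2 / (C.mulVec z ⬝ᵥ z) := by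
        rw [ht, Real.sq_sqrt (by positivity)]
      have hmem : (t • z) ∈ {z : m → ℝ | C.mulVec z ⬝ᵥ z ≤ 2} := by
        simp only [Set.mem_setOf_eq, Matrix.mulVec_smul, smul_dotProduct,
          dotProduct_smul, smul_eq_mul]
        rw [← mul_assoc, ← pow_two, ht2]
        rw [div_mul_cancel₀ _ (ne_of_gt hCz)]
      have h2 := hsub hmem
      simp only [Set.mem_setOf_eq, Matrix.mulVec_smul, smul_dotProduct,
        dotProduct_smul, smul_eq_mul] at h2
      rw [← mul_assoc, ← pow_two, ht2] at h2
      rw [div_mul_eq_mul_div, div_le_iff₀ hCz] at h2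
      nlinarith
  have h1 := key A B hA hB (le_of_eq h)
  have h2 := key B A hB hA (le_of_eq h.symm)
  have hAt : Aᵀ = A := by
    rw [← Matrix.conjTranspose_eq_transpose_of_trivial]; exact hA.1
  have hBt : Bᵀ = B := by
    rw [← Matrix.conjTranspose_eq_transpose_of_trivial]; exact hB.1
  exact pg_polarization A B hAt hBt (fun z => le_antisymm (h2 z) (h1 z))

end Aux

/-- Image of the ball under an invertible linear map is the corresponding ellipsoid. -/
lemma pg_ball_image {n : ℕ} (ℏ : ℝ) (hℏ : 0 < ℏ)
    (S : Matrix (Fin n ⊕ Fin n) (Fin n ⊕ Fin n) ℝ) (hS : S.det ≠ 0) :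
    (fun z => S.mulVec z) '' ballh n ℏ
      = {z | ((ℏ / 2) • (S * Sᵀ))⁻¹.mulVec z ⬝ᵥ z ≤ 2} := by
  have hSu : IsUnit S.det := isUnit_iff_ne_zero.mpr hS
  have hStu : IsUnit Sᵀ.det := by rw [Matrix.det_transpose]; exact hSu
  have hGinv : ((ℏ / 2) • (S * Sᵀ))⁻¹ = (2 / ℏ) • ((Sᵀ)⁻¹ * S⁻¹) := by
    apply Matrix.inv_eq_right_inv
    rw [Matrix.smul_mul, Matrix.mul_smul, smul_smul]
    have e : S * Sᵀ * ((Sᵀ)⁻¹ * S⁻¹) = 1 := by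
      calc S * Sᵀ * ((Sᵀ)⁻¹ * S⁻¹) = S * (Sᵀ * (Sᵀ)⁻¹) * S⁻¹ := by noncomm_ring
        _ = 1 := by rw [Matrix.mul_nonsing_inv _ hStu, Matrix.mul_one,
              Matrix.mul_nonsing_inv _ hSu]
    rw [e]
    have : (ℏ / 2) * (2 / ℏ) = 1 := by field_simp
    rw [this, one_smul]
  ext z
  simp only [Set.mem_image, Set.mem_setOf_eq, ballh]
  have hval : ((ℏ / 2) • (S * Sᵀ))⁻¹ *ᵥ z ⬝ᵥ z
      = (2 / ℏ) * ((S⁻¹ *ᵥ z) ⬝ᵥ (S⁻¹ *ᵥ z)) := by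
    rw [hGinv, Matrix.smul_mulVec, smul_dotProduct, smul_eq_mul]
    congr 1
    rw [← Matrix.mulVec_mulVec]
    rw [show (Sᵀ)⁻¹ = (S⁻¹)ᵀ from (Matrix.transpose_nonsing_inv S).symm]
    rw [pg_dot]
  rw [hval]
  constructor
  · rintro ⟨w, hw, rfl⟩
    have hww : S⁻¹ *ᵥ (S *ᵥ w) = w := by
      rw [Matrix.mulVec_mulVec, Matrix.nonsing_inv_mul _ hSu, Matrix.one_mulVec]
    rw [hww, div_mul_eq_mul_div, div_le_iff₀ hℏ]
    nlinarith [hw]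
  · intro hz
    rw [div_mul_eq_mul_div, div_le_iff₀ hℏ] at hz
    refine ⟨S⁻¹ *ᵥ z, by nlinarith, ?_⟩
    rw [Matrix.mulVec_mulVec, Matrix.mul_nonsing_inv _ hSu, Matrix.one_mulVec]

/-- Converse: a symplectic factorization forces the determinant. -/
lemma pg_converse {n : ℕ} (ℏ : ℝ) (hℏ : 0 < ℏ)
    (S : Matrix (Fin n ⊕ Fin n) (Fin n ⊕ Fin n) ℝ) (hS : IsSymplectic S) :
    ((ℏ / 2) • (S * Sᵀ)).det = (ℏ / 2) ^ (2 * n) ∧ S.det ≠ 0 := by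
  have hdJ : (J n).det ≠ 0 := by
    intro h0
    have := pg_J_det_sq n
    rw [h0, mul_zero] at this
    exact zero_ne_one this
  have hSdet : S.det * S.det = 1 := by
    have h := congrArg Matrix.det hS
    rw [Matrix.det_mul, Matrix.det_mul, Matrix.det_transpose] at h
    have h2 : (J n).det * (S.det * S.det) = (J n).det * 1 := by ring_nf; linarith [h]
    exact mul_left_cancel₀ hdJ h2
  have hS0 : S.det ≠ 0 := fun h0 => by rw [h0, mul_zero] at hSdet; exact zero_ne_one hSdet
  refine ⟨?_, hS0⟩
  rw [Matrix.det_smul, Matrix.det_mul, Matrix.det_transpose, hSdet, mul_one,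
    Fintype.card_sum, Fintype.card_fin, two_mul]

open scoped MatrixOrder in
/-- The heart: quantum condition + critical determinant forces symplectic covariance. -/
lemma pg_forward {n : ℕ} (ℏ : ℝ) (hℏ : 0 < ℏ)
    (Sig : Matrix (Fin n ⊕ Fin n) (Fin n ⊕ Fin n) ℝ) (hSig : Sig.PosDef)
    (hquant : (Sig.map (Complex.ofReal ·) + (Complex.I * (ℏ / 2 : ℝ)) •
        (J n).map (Complex.ofReal ·)).PosSemidef)
    (hdet : Sig.det = (ℏ / 2) ^ (2 * n)) :
    ∃ S : Matrix (Fin n ⊕ Fin n) (Fin n ⊕ Fin n) ℝ,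
      IsSymplectic S ∧ Sig = (ℏ / 2) • (S * Sᵀ) := by
  set c : ℝ := ℏ / 2 with hc
  have hc0 : 0 < c := by positivity
  have hdu : IsUnit Sig.det := isUnit_iff_ne_zero.mpr (ne_of_gt hSig.det_pos)
  have hSigdet : Sig.det ≠ 0 := ne_of_gt hSig.det_pos
  have hSigT : Sigᵀ = Sig := by
    rw [← Matrix.conjTranspose_eq_transpose_of_trivial]; exact hSig.1
  have hSiT : Sig⁻¹ᵀ = Sig⁻¹ := by rw [Matrix.transpose_nonsing_inv, hSigT]
  have hSiPD : Sig⁻¹.PosDef := hSig.inv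
  set K : Matrix (Fin n ⊕ Fin n) (Fin n ⊕ Fin n) ℝ := (J n)ᵀ * Sig⁻¹ * J n with hK
  have hKpsd : K.PosSemidef := by
    have := hSiPD.posSemidef.conjTranspose_mul_mul_same (J n)
    simpa [Matrix.conjTranspose_eq_transpose_of_trivial] using this
  have hKt : Kᵀ = K := by
    rw [hK, Matrix.transpose_mul, Matrix.transpose_mul, Matrix.transpose_transpose,
      hSiT, Matrix.mul_assoc]
  have hKdet : K.det = (Sig.det)⁻¹ := by
    rw [hK, Matrix.det_mul, Matrix.det_mul, Matrix.det_transpose,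
      Matrix.det_nonsing_inv, Ring.inverse_eq_inv']
    have := pg_J_det_sq n
    field_simp
    nlinarith [this]
  have hKd0 : K.det ≠ 0 := by rw [hKdet]; exact inv_ne_zero hSigdet
  have hKPD : K.PosDef := pg_posDef_of_psd_det K hKpsd hKd0
  -- the quantum inequality gives Sig - c² K ⪰ 0
  have hJskew : (J n)ᵀ = -(J n) := pg_J_transpose n
  have hdiff : (Sig - (c ^ 2) • K).PosSemidef := by
    refine posSemidef_iff_dotProduct_mulVec.mpr ⟨?_, ?_⟩
    · rw [Matrix.IsHermitian, Matrix.conjTranspose_eq_transpose_of_trivial,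
        Matrix.transpose_sub, Matrix.transpose_smul, hSigT, hKt]
    · intro x
      have hq := pg_quad_re Sig (J n) c hJskew hquant (c • (Sig⁻¹ *ᵥ ((J n) *ᵥ x))) x
      have hxK : x ⬝ᵥ K *ᵥ x = ((J n) *ᵥ x) ⬝ᵥ (Sig⁻¹ *ᵥ ((J n) *ᵥ x)) := by
        rw [hK, ← Matrix.mulVec_mulVec, ← Matrix.mulVec_mulVec, ← pg_dot,
          Matrix.transpose_transpose]
      have hcollapse : Sig * (Sig⁻¹ * J n) = J n := by
        rw [← Matrix.mul_assoc, Matrix.mul_nonsing_inv _ hdu, Matrix.one_mul]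
      have e1 : (c • (Sig⁻¹ *ᵥ ((J n) *ᵥ x))) ⬝ᵥ Sig *ᵥ (c • (Sig⁻¹ *ᵥ ((J n) *ᵥ x)))
          = c ^ 2 * (x ⬝ᵥ K *ᵥ x) := by
        simp only [Matrix.mulVec_smul, Matrix.mulVec_mulVec, smul_dotProduct,
          dotProduct_smul, smul_eq_mul]
        rw [hcollapse, hxK, ← Matrix.mulVec_mulVec]
        rw [dotProduct_comm]
        ring
      have hkey : ∀ w, x ⬝ᵥ (J n) *ᵥ w = -(((J n) *ᵥ x) ⬝ᵥ w) := by
        intro w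
        calc x ⬝ᵥ (J n) *ᵥ w = ((J n)ᵀ *ᵥ x) ⬝ᵥ w := (pg_dot _ x w).symm
          _ = -(((J n) *ᵥ x) ⬝ᵥ w) := by
              rw [hJskew, Matrix.neg_mulVec, neg_dotProduct]
      have e3 : x ⬝ᵥ (J n) *ᵥ (c • (Sig⁻¹ *ᵥ ((J n) *ᵥ x))) = -(c * (x ⬝ᵥ K *ᵥ x)) := by
        rw [Matrix.mulVec_smul, dotProduct_smul, smul_eq_mul, hkey, hxK]
        ring
      rw [e1, e3] at hq
      have hstar : star x = x := by
        funext i; simp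
      rw [hstar, Matrix.sub_mulVec, dotProduct_sub, Matrix.smul_mulVec,
        dotProduct_smul, smul_eq_mul]
      linarith
  have hdet2 : ((c ^ 2) • K).det = Sig.det := by
    rw [Matrix.det_smul, hKdet, hdet, Fintype.card_sum, Fintype.card_fin]
    rw [← pow_mul]
    have hne : c ^ (2 * n) ≠ 0 := by positivity
    have e : 2 * (n + n) = 2 * n + 2 * n := by ring
    rw [e, pow_add]
    field_simp
  have hrig : Sig - (c ^ 2) • K = 0 := by
    apply pg_det_rigid ((c ^ 2) • K) _ (pg_smul_posDef (by positivity) hKPD) hdiff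
    rw [show (c ^ 2) • K + (Sig - (c ^ 2) • K) = Sig from by abel, hdet2]
  have hSigK : Sig = (c ^ 2) • K := by
    have := sub_eq_zero.mp hrig
    exact this
  -- Sig * J * Sig = c² J
  have hSJS : Sig * J n * Sig = (c ^ 2) • J n := by
    have e : Sig * J n * ((J n)ᵀ * Sig⁻¹ * J n) = J n := by
      calc Sig * J n * ((J n)ᵀ * Sig⁻¹ * J n)
          = Sig * (J n * (J n)ᵀ) * (Sig⁻¹ * J n) := by noncomm_ring
        _ = J n := by rw [pg_J_mul_Jt, Matrix.mul_one, ← Matrix.mul_assoc,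
              Matrix.mul_nonsing_inv _ hdu, Matrix.one_mul]
    nth_rewrite 2 [hSigK]
    rw [hK, Matrix.mul_smul, e]
  set M : Matrix (Fin n ⊕ Fin n) (Fin n ⊕ Fin n) ℝ := c⁻¹ • Sig with hM
  have hMPD : M.PosDef := pg_smul_posDef (by positivity) hSig
  have hMJM : M * J n * M = J n := by
    rw [hM, Matrix.smul_mul, Matrix.smul_mul, Matrix.mul_smul, smul_smul, hSJS, smul_smul]
    have : c⁻¹ * c⁻¹ * c ^ 2 = 1 := by field_simp
    rw [this, one_smul]
  have hMdu : IsUnit M.det := isUnit_iff_ne_zero.mpr (ne_of_gt hMPD.det_pos)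
  set S : Matrix (Fin n ⊕ Fin n) (Fin n ⊕ Fin n) ℝ := CFC.sqrt M with hSdef
  have hSpsd : S.PosSemidef := (CFC.sqrt_nonneg M).posSemidef
  have hSS : S * S = M := CFC.sqrt_mul_sqrt_self M hMPD.posSemidef.nonneg
  have hSt : Sᵀ = S := by
    rw [← Matrix.conjTranspose_eq_transpose_of_trivial]; exact hSpsd.1
  have hSdet2 : S.det * S.det = M.det := by rw [← Matrix.det_mul, hSS]
  have hSd0 : S.det ≠ 0 := fun h0 => by
    rw [h0, mul_zero] at hSdet2; exact (ne_of_gt hMPD.det_pos) hSdet2.symm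
  have hSu : IsUnit S.det := isUnit_iff_ne_zero.mpr hSd0
  have hMinv : M⁻¹ = (J n)ᵀ * M * J n := by
    apply Matrix.inv_eq_left_inv
    calc ((J n)ᵀ * M * J n) * M = (J n)ᵀ * (M * J n * M) := by noncomm_ring
      _ = 1 := by rw [hMJM, pg_Jt_mul_J]
  have hTpsd : ((J n)ᵀ * S * J n).PosSemidef := by
    have := hSpsd.conjTranspose_mul_mul_same (J n)
    simpa [Matrix.conjTranspose_eq_transpose_of_trivial] using this
  have hT2 : ((J n)ᵀ * S * J n) ^ 2 = M⁻¹ := by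
    rw [pow_two, hMinv]
    calc ((J n)ᵀ * S * J n) * ((J n)ᵀ * S * J n)
        = (J n)ᵀ * S * (J n * (J n)ᵀ) * S * J n := by noncomm_ring
      _ = (J n)ᵀ * (S * S) * J n := by rw [pg_J_mul_Jt, Matrix.mul_one]; noncomm_ring
      _ = (J n)ᵀ * M * J n := by rw [hSS]
  have hSi2 : (S⁻¹) ^ 2 = M⁻¹ := by
    rw [pow_two, ← Matrix.mul_inv_rev, hSS]
  have hTS : (J n)ᵀ * S * J n = S⁻¹ :=
    (CFC.sq_eq_sq_iff _ _ hTpsd.nonneg hSpsd.inv.nonneg).mp (by rw [hT2, hSi2])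
  have hSJS' : S * J n * S = J n := by
    calc S * J n * S = (J n * (J n)ᵀ) * (S * J n * S) := by rw [pg_J_mul_Jt, Matrix.one_mul]
      _ = J n * ((J n)ᵀ * S * J n) * S := by noncomm_ring
      _ = J n * S⁻¹ * S := by rw [hTS]
      _ = J n := by rw [Matrix.mul_assoc, Matrix.nonsing_inv_mul _ hSu, Matrix.mul_one]
  refine ⟨S, ?_, ?_⟩
  · rw [IsSymplectic, hSt, hSJS']
  · rw [hSt, hSS, hM, smul_smul]
    have : c * c⁻¹ = 1 := by field_simp
    rw [this, one_smul]


/-- let `Σ` be a real symmetric positive definite `2n×2n` matrix with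
`Σ + (iℏ/2)J` positive semidefinite. Then `det Σ = (ℏ/2)^{2n}` iff the covariance
ellipsoid `Ω = {z : Σ⁻¹z·z ≤ 2}` is a quantum blob, equivalently iff
`Σ = (ℏ/2) S Sᵀ` for some `S ∈ Sp(n)` (purity of the corresponding Gaussian state). -/
theorem pure_gaussian_iff_covariance_ellipsoid_quantum_blob
    {n : ℕ} (ℏ : ℝ) (hℏ : 0 < ℏ)
    (Sig : Matrix (Fin n ⊕ Fin n) (Fin n ⊕ Fin n) ℝ) (hSig : Sig.PosDef)
    (hquant : (Sig.map (Complex.ofReal ·) + (Complex.I * (ℏ / 2 : ℝ)) •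
        (J n).map (Complex.ofReal ·)).PosSemidef)
    (Ω : Set (Fin n ⊕ Fin n → ℝ)) (hΩ : Ω = {z | Sig⁻¹.mulVec z ⬝ᵥ z ≤ 2}) :
    (Sig.det = (ℏ / 2) ^ (2 * n)
      ↔ ∃ S : Matrix (Fin n ⊕ Fin n) (Fin n ⊕ Fin n) ℝ,
          IsSymplectic S ∧ Ω = (fun z => S.mulVec z) '' ballh n ℏ)
    ∧ (Sig.det = (ℏ / 2) ^ (2 * n)
      ↔ ∃ S : Matrix (Fin n ⊕ Fin n) (Fin n ⊕ Fin n) ℝ,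
          IsSymplectic S ∧ Sig = (ℏ / 2) • (S * Sᵀ)) := by
  have hSigdet : Sig.det ≠ 0 := ne_of_gt hSig.det_pos
  have hdu : IsUnit Sig.det := isUnit_iff_ne_zero.mpr hSigdet
  have iff2 : Sig.det = (ℏ / 2) ^ (2 * n) ↔ ∃ S : Matrix (Fin n ⊕ Fin n) (Fin n ⊕ Fin n) ℝ,
      IsSymplectic S ∧ Sig = (ℏ / 2) • (S * Sᵀ) := by
    constructor
    · exact pg_forward ℏ hℏ Sig hSig hquant
    · rintro ⟨S, hS, hEq⟩
      rw [hEq]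
      exact (pg_converse ℏ hℏ S hS).1
  refine ⟨?_, iff2⟩
  constructor
  · intro hdet
    obtain ⟨S, hSymp, hEq⟩ := iff2.mp hdet
    have hS0 := (pg_converse ℏ hℏ S hSymp).2
    refine ⟨S, hSymp, ?_⟩
    rw [hΩ, hEq, pg_ball_image ℏ hℏ S hS0]
  · rintro ⟨S, hSymp, hIm⟩
    have hS0 := (pg_converse ℏ hℏ S hSymp).2
    apply iff2.mpr
    refine ⟨S, hSymp, ?_⟩
    have hG : ((ℏ / 2) • (S * Sᵀ)).PosDef :=
      pg_smul_posDef (by positivity) (pg_mul_transpose_posDef S hS0)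
    have hGdu : IsUnit ((ℏ / 2) • (S * Sᵀ)).det :=
      isUnit_iff_ne_zero.mpr (ne_of_gt hG.det_pos)
    have hsets : {z : Fin n ⊕ Fin n → ℝ | Sig⁻¹.mulVec z ⬝ᵥ z ≤ 2}
        = {z | ((ℏ / 2) • (S * Sᵀ))⁻¹.mulVec z ⬝ᵥ z ≤ 2} := by
      rw [← hΩ, hIm, pg_ball_image ℏ hℏ S hS0]
    have hinv_eq : Sig⁻¹ = ((ℏ / 2) • (S * Sᵀ))⁻¹ :=
      pg_ellipsoid_eq _ _ hSig.inv hG.inv hsets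
    calc Sig = Sig⁻¹⁻¹ := (Matrix.nonsing_inv_nonsing_inv Sig hdu).symm
      _ = ((ℏ / 2) • (S * Sᵀ))⁻¹⁻¹ := by rw [hinv_eq]
      _ = (ℏ / 2) • (S * Sᵀ) := Matrix.nonsing_inv_nonsing_inv _ hGdu
end
end
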